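/- Let $M_0 \in \mathbb{R}^{p \times r}$ with $\mathrm{rank}(M_0) = q < p$, let $\Sigma \in \mathbb{R}^{p \times p}$ be positive definite, and let $R \in \mathbb{R}^{p \times (p-q)}$ have columns forming an orthonormal basis of $\ker(M_0^\top)$. For each $k$, the matrix $B_k := k^2 M_0 M_0^\top + \Sigma$ is invertible, and $\lim_{k \to \infty} B_k^{-1} = R (R^\top \Sigma R)^{-1} R^\top$. -/

import Mathlib

set_option maxHeartbeats 2000000


open Matrix Filter Topology Module

lemma aux_dot_symm {n : Type*} [Fintype n] {A : Matrix n n ℝ} (hA : Aᵀ = A)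
    (u v : n → ℝ) : u ⬝ᵥ A *ᵥ v = v ⬝ᵥ A *ᵥ u := by
  rw [dotProduct_mulVec, ← mulVec_transpose, hA, dotProduct_comm]

/-- Cauchy–Schwarz for a positive semidefinite real bilinear form. -/
lemma aux_psd_cs {n : Type*} [Fintype n] {A : Matrix n n ℝ} (hA : A.PosSemidef)
    (x y : n → ℝ) : (x ⬝ᵥ A *ᵥ y) ^ 2 ≤ (x ⬝ᵥ A *ᵥ x) * (y ⬝ᵥ A *ᵥ y) := by
  have hAT : Aᵀ = A := by
    rw [← conjTranspose_eq_transpose_of_trivial, hA.1.eq]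
  have key : ∀ t : ℝ, 0 ≤ (y ⬝ᵥ A *ᵥ y) * (t * t) + (2 * (x ⬝ᵥ A *ᵥ y)) * t + (x ⬝ᵥ A *ᵥ x) := by
    intro t
    have h0 := hA.dotProduct_mulVec_nonneg (x + t • y)
    simp only [star_trivial] at h0
    have : (x + t • y) ⬝ᵥ A *ᵥ (x + t • y)
        = (y ⬝ᵥ A *ᵥ y) * (t * t) + (2 * (x ⬝ᵥ A *ᵥ y)) * t + (x ⬝ᵥ A *ᵥ x) := by
      simp only [mulVec_add, mulVec_smul, dotProduct_add, add_dotProduct,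
        dotProduct_smul, smul_dotProduct, smul_eq_mul, aux_dot_symm hAT y x]
      ring
    linarith [this ▸ h0]
  have hd := discrim_le_zero key
  rw [discrim] at hd
  nlinarith [hd]

lemma aux_range_eq_ker {p r q : ℕ} (hq : q < p)
    (M0 : Matrix (Fin p) (Fin r) ℝ) (hrank : M0.rank = q)
    (R : Matrix (Fin p) (Fin (p - q)) ℝ)
    (hRorth : Rᵀ * R = 1) (hRker : M0ᵀ * R = 0) :
    LinearMap.range M0.mulVecLin = LinearMap.ker (Rᵀ).mulVecLin := by
  have hRM : Rᵀ * M0 = 0 := by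
    have := congrArg Matrix.transpose hRker
    simpa [Matrix.transpose_mul] using this
  have hle : LinearMap.range M0.mulVecLin ≤ LinearMap.ker (Rᵀ).mulVecLin := by
    rintro v ⟨x, rfl⟩
    simp only [LinearMap.mem_ker, mulVecLin_apply, mulVec_mulVec, hRM, zero_mulVec]
  have hRinj : Function.Injective R.mulVecLin := by
    intro a b hab
    have h1 : ∀ x, Rᵀ *ᵥ (R *ᵥ x) = x := by
      intro x
      rw [mulVec_mulVec, hRorth, one_mulVec]
    have := congrArg (fun v => Rᵀ *ᵥ v) hab
    simpa [mulVecLin_apply, h1] using this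
  have hrankR : R.rank = p - q := by
    rw [Matrix.rank, LinearMap.finrank_range_of_inj hRinj]
    simp
  have hrankRT : (Rᵀ).rank = p - q := by rw [Matrix.rank_transpose, hrankR]
  have hkerdim : finrank ℝ (LinearMap.ker (Rᵀ).mulVecLin) = q := by
    have h := LinearMap.finrank_range_add_finrank_ker (Rᵀ).mulVecLin
    rw [show finrank ℝ (LinearMap.range (Rᵀ).mulVecLin) = p - q from hrankRT] at h
    simp only [Module.finrank_pi, Fintype.card_fin] at h
    omega
  exact Submodule.eq_of_le_of_finrank_eq hle (by rw [show finrank ℝ (LinearMap.range M0.mulVecLin) = q from hrank, hkerdim])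

/-- For `M₀` of rank `q < p`, `Σ` positive definite, and `R` whose columns
form an orthonormal basis of `ker(M₀ᵀ)`, each `B k = k² M₀M₀ᵀ + Σ` is invertible and
`(B k)⁻¹ → R (Rᵀ Σ R)⁻¹ Rᵀ` as `k → ∞`. -/
theorem stmt0 {p r q : ℕ} (hq : q < p)
    (M0 : Matrix (Fin p) (Fin r) ℝ) (hrank : M0.rank = q)
    (Sig : Matrix (Fin p) (Fin p) ℝ) (hSig : Sig.PosDef)
    (R : Matrix (Fin p) (Fin (p - q)) ℝ)
    (hRorth : Rᵀ * R = 1) (hRker : M0ᵀ * R = 0)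
    (B : ℕ → Matrix (Fin p) (Fin p) ℝ)
    (hB : ∀ k : ℕ, B k = ((k : ℝ) ^ 2) • (M0 * M0ᵀ) + Sig) :
    (∀ k : ℕ, IsUnit (B k).det) ∧
      Tendsto (fun k : ℕ => (B k)⁻¹) atTop (𝓝 (R * (Rᵀ * Sig * R)⁻¹ * Rᵀ)) := by
  classical
  have hSigT : Sigᵀ = Sig := by
    rw [← conjTranspose_eq_transpose_of_trivial, hSig.1.eq]
  have hSigdet : IsUnit Sig.det := hSig.det_pos.ne'.isUnit
  -- B k positive definite
  have hM0T : M0ᴴ = M0ᵀ := conjTranspose_eq_transpose_of_trivial M0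
  have hMMT : (M0 * M0ᵀ).PosSemidef := by
    rw [← hM0T]; exact posSemidef_self_mul_conjTranspose M0
  have hSmulPSD : ∀ k : ℕ, (((k : ℝ) ^ 2) • (M0 * M0ᵀ)).PosSemidef := by
    intro k
    refine Matrix.PosSemidef.of_dotProduct_mulVec_nonneg ?_ fun x => ?_
    · have h1 := hMMT.1
      unfold Matrix.IsHermitian at h1 ⊢
      rw [conjTranspose_smul, h1]
      simp
    · rw [smul_mulVec, dotProduct_smul, smul_eq_mul]
      exact mul_nonneg (by positivity) (hMMT.dotProduct_mulVec_nonneg x)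
  have hBpd : ∀ k : ℕ, (B k).PosDef := fun k => by
    rw [hB k]; exact Matrix.PosDef.posSemidef_add (hSmulPSD k) hSig
  have hBdet : ∀ k : ℕ, IsUnit (B k).det := fun k => (hBpd k).det_pos.ne'.isUnit
  have hBT : ∀ k : ℕ, (B k)ᵀ = B k := fun k => by
    rw [← conjTranspose_eq_transpose_of_trivial, (hBpd k).1.eq]
  refine ⟨hBdet, ?_⟩
  -- G = Rᵀ Σ R is positive definite
  set G : Matrix (Fin (p - q)) (Fin (p - q)) ℝ := Rᵀ * Sig * R with hG
  have hRinjvec : ∀ x : Fin (p - q) → ℝ, R *ᵥ x = 0 → x = 0 := by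
    intro x hx
    have : Rᵀ *ᵥ (R *ᵥ x) = Rᵀ *ᵥ 0 := by rw [hx]
    rwa [mulVec_mulVec, hRorth, one_mulVec, mulVec_zero] at this
  have hGpd : G.PosDef := by
    refine Matrix.PosDef.of_dotProduct_mulVec_pos ?_ ?_
    · show Gᴴ = G
      rw [conjTranspose_eq_transpose_of_trivial, hG, transpose_mul, transpose_mul, hSigT,
        transpose_transpose, Matrix.mul_assoc]
    · intro x hx
      have hRx : R *ᵥ x ≠ 0 := fun h => hx (hRinjvec x h)
      have := hSig.dotProduct_mulVec_pos hRx
      simp only [star_trivial] at this ⊢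
      calc (0:ℝ) < (R *ᵥ x) ⬝ᵥ Sig *ᵥ (R *ᵥ x) := this
        _ = x ⬝ᵥ G *ᵥ x := by
            rw [hG, Matrix.mul_assoc, ← mulVec_mulVec, ← mulVec_mulVec,
              dotProduct_mulVec (R *ᵥ x), ← mulVec_transpose]
            rw [dotProduct_mulVec x, ← mulVec_transpose, transpose_transpose, hSigT]
            exact dotProduct_comm _ _
  have hGdet : IsUnit G.det := hGpd.det_pos.ne'.isUnit
  set P : Matrix (Fin p) (Fin p) ℝ := R * G⁻¹ * Rᵀ with hP
  -- key identity : B k * R = Sig * R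
  have hBR : ∀ k : ℕ, B k * R = Sig * R := by
    intro k
    rw [hB k, Matrix.add_mul, Matrix.smul_mul, Matrix.mul_assoc, hRker, Matrix.mul_zero,
      smul_zero, zero_add]
  set QM : Matrix (Fin p) (Fin p) ℝ := 1 - Sig * P with hQM
  have hkey : ∀ k : ℕ, (B k)⁻¹ = P + (B k)⁻¹ * QM := by
    intro k
    have h1 : (B k)⁻¹ * (Sig * P) = P := by
      have h2 : Sig * P = B k * P := by
        rw [hP, show Sig * (R * G⁻¹ * Rᵀ) = Sig * R * (G⁻¹ * Rᵀ) by
            simp only [Matrix.mul_assoc],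
          show B k * (R * G⁻¹ * Rᵀ) = B k * R * (G⁻¹ * Rᵀ) by simp only [Matrix.mul_assoc],
          hBR k]
      rw [h2, ← Matrix.mul_assoc, Matrix.nonsing_inv_mul (B k) (hBdet k), Matrix.one_mul]
    rw [hQM, Matrix.mul_sub, Matrix.mul_one, h1]
    abel
  -- columns of QM lie in the range of M0
  have hRQ : Rᵀ * QM = 0 := by
    rw [hQM, Matrix.mul_sub, Matrix.mul_one, hP,
      show Rᵀ * (Sig * (R * G⁻¹ * Rᵀ)) = (Rᵀ * Sig * R) * (G⁻¹ * Rᵀ) by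
        simp only [Matrix.mul_assoc],
      ← hG, ← Matrix.mul_assoc, Matrix.mul_nonsing_inv G hGdet, Matrix.one_mul, sub_self]
  have hrangeker := aux_range_eq_ker hq M0 hrank R hRorth hRker
  have hcol : ∀ j : Fin p, ∃ w : Fin r → ℝ, M0 *ᵥ w = fun i => QM i j := by
    intro j
    have hmem : (fun i => QM i j) ∈ LinearMap.ker (Rᵀ).mulVecLin := by
      simp only [LinearMap.mem_ker, mulVecLin_apply]
      funext l
      have : (Rᵀ * QM) l j = 0 := by rw [hRQ]; rfl
      simpa [Matrix.mul_apply, Matrix.mulVec, dotProduct] using this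
    rw [← hrangeker] at hmem
    obtain ⟨w, hw⟩ := hmem
    exact ⟨w, hw⟩
  choose W hW using hcol
  -- the remainder tends to zero
  have hzero : Tendsto (fun k : ℕ => (B k)⁻¹ * QM) atTop (𝓝 0) := by
    refine tendsto_pi_nhds.mpr fun i => tendsto_pi_nhds.mpr fun j => ?_
    -- fixed data
    set x : Fin p → ℝ := Sig⁻¹ *ᵥ Pi.single i 1 with hx
    have hSx : Sig *ᵥ x = Pi.single i 1 := by
      rw [hx, mulVec_mulVec, Matrix.mul_nonsing_inv Sig hSigdet, one_mulVec]
    set D : ℝ := x ⬝ᵥ Sig *ᵥ x with hD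
    have hDnn : 0 ≤ D := by
      have := hSig.posSemidef.dotProduct_mulVec_nonneg x
      simpa [star_trivial] using this
    set c2 : ℝ := W j ⬝ᵥ W j with hc2
    have hc2nn : 0 ≤ c2 := Finset.sum_nonneg fun l _ => mul_self_nonneg _
    have hbound : ∀ k : ℕ, 1 ≤ k →
        |((B k)⁻¹ * QM) i j| ≤ Real.sqrt (D * c2) / k := by
      intro k hk
      set y : Fin p → ℝ := (B k)⁻¹ *ᵥ fun l => QM l j with hy
      have hentry : ((B k)⁻¹ * QM) i j = y i := by
        simp [hy, Matrix.mul_apply, Matrix.mulVec, dotProduct]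
      have hBy : B k *ᵥ y = fun l => QM l j := by
        rw [hy, mulVec_mulVec, Matrix.mul_nonsing_inv (B k) (hBdet k), one_mulVec]
      set u : Fin r → ℝ := M0ᵀ *ᵥ y with hu
      set a : ℝ := u ⬝ᵥ u with ha
      set s : ℝ := y ⬝ᵥ Sig *ᵥ y with hs
      have hann : 0 ≤ a := Finset.sum_nonneg fun l _ => mul_self_nonneg _
      have hsnn : 0 ≤ s := by
        have := hSig.posSemidef.dotProduct_mulVec_nonneg y
        simpa [star_trivial] using this
      set K : ℝ := (k : ℝ) ^ 2 with hK
      have hK1 : (1:ℝ) ≤ K := by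
        rw [hK]
        have : (1:ℝ) ≤ (k:ℝ) := by exact_mod_cast hk
        nlinarith
      -- t computed two ways
      have ht1 : y ⬝ᵥ (B k *ᵥ y) = K * a + s := by
        rw [hB k, add_mulVec, smul_mulVec, dotProduct_add, dotProduct_smul, smul_eq_mul,
          ← mulVec_mulVec, dotProduct_mulVec y, ← mulVec_transpose, ← hu, ← ha, ← hs]
      have ht2 : y ⬝ᵥ (B k *ᵥ y) = u ⬝ᵥ W j := by
        rw [hBy, show (fun l => QM l j) = M0 *ᵥ W j from (hW j).symm,
          dotProduct_mulVec y, ← mulVec_transpose, ← hu]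
      have hCS : (u ⬝ᵥ W j) ^ 2 ≤ a * c2 := by
        rw [ha, hc2]
        simpa [dotProduct, sq] using
          Finset.sum_mul_sq_le_sq_mul_sq Finset.univ u (W j)
      have hts : K * a + s = u ⬝ᵥ W j := by rw [← ht1, ht2]
      -- deduce s * K ≤ c2
      have hK0 : (0:ℝ) ≤ K := le_trans zero_le_one hK1
      have hsK : s * K ≤ c2 := by
        set t : ℝ := u ⬝ᵥ W j with htdef
        have hst : s ≤ t := by nlinarith [hts, mul_nonneg hK0 hann]
        have htnn : (0:ℝ) ≤ t := le_trans hsnn hst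
        rcases eq_or_lt_of_le htnn with h0 | hpos
        · have hs0 : s = 0 := le_antisymm (h0 ▸ hst) hsnn
          simpa [hs0] using hc2nn
        · have h1 : K * t ^ 2 ≤ K * (a * c2) := mul_le_mul_of_nonneg_left hCS hK0
          have h2 : K * (a * c2) ≤ t * c2 := by
            have hKa : t - K * a = s := by linarith [hts]
            nlinarith [mul_nonneg hsnn hc2nn]
          have h3 : K * t ≤ c2 := by nlinarith [h1, h2, hpos]
          have h4 : s * K ≤ t * K := mul_le_mul_of_nonneg_right hst hK0
          nlinarith [h3, h4]
      -- entry bound via Cauchy-Schwarz with Sig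
      have hyi : y i = x ⬝ᵥ Sig *ᵥ y := by
        rw [dotProduct_mulVec x, ← mulVec_transpose, hSigT, hSx]
        simp [dotProduct, Pi.single_apply]
      have hsq : (y i) ^ 2 ≤ D * s := by
        rw [hyi, hD, hs]
        exact aux_psd_cs hSig.posSemidef x y
      have hk0 : (0:ℝ) < (k:ℝ) := by exact_mod_cast Nat.lt_of_lt_of_le Nat.zero_lt_one hk
      have hKpos : (0:ℝ) < K := lt_of_lt_of_le one_pos hK1
      have hsle : s ≤ c2 / K := (le_div_iff₀ hKpos).mpr hsK
      have hsq2 : (y i) ^ 2 ≤ (D * c2) / K := by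
        calc (y i) ^ 2 ≤ D * s := hsq
          _ ≤ D * (c2 / K) := mul_le_mul_of_nonneg_left hsle hDnn
          _ = (D * c2) / K := by ring
      rw [hentry]
      have h1 : |y i| = Real.sqrt ((y i) ^ 2) := (Real.sqrt_sq_eq_abs _).symm
      rw [h1]
      have h2 : Real.sqrt ((y i) ^ 2) ≤ Real.sqrt ((D * c2) / K) := Real.sqrt_le_sqrt hsq2
      have h3 : Real.sqrt ((D * c2) / K) = Real.sqrt (D * c2) / k := by
        rw [Real.sqrt_div (mul_nonneg hDnn hc2nn), hK]
        congr 1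
        rw [show ((k:ℝ))^2 = (k:ℝ) * (k:ℝ) by ring, Real.sqrt_mul_self hk0.le]
      rw [h3] at h2
      exact h2
    refine squeeze_zero_norm' (a := fun k : ℕ => Real.sqrt (D * c2) / (k:ℝ)) ?_ ?_
    · exact (eventually_ge_atTop 1).mono fun k hk => by
        simpa [Real.norm_eq_abs] using hbound k hk
    · have : Tendsto (fun k : ℕ => Real.sqrt (D * c2) / (k:ℝ)) atTop (𝓝 0) :=
        tendsto_const_nhds.div_atTop tendsto_natCast_atTop_atTop
      exact this
  -- conclude
  have heq : (fun k : ℕ => (B k)⁻¹) = fun k : ℕ => P + (B k)⁻¹ * QM := funext hkey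
  rw [heq]
  have := (tendsto_const_nhds (x := P) (f := atTop (α := ℕ))).add hzero
  simpa using this
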